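/- Let ε > 0, let p_1 < p_2 < … < p_M be real numbers (M ≥ 2), and let f : [p_1, p_M] → ℝ be nondecreasing with f(p_{j+1}) − f(p_j) ≤ ε for each j ∈ {1,…,M−1}. Let v̂_1,…,v̂_M be arbitrary real numbers, let (w_1,…,w_M) be an isotonic regression of (v̂_1,…,v̂_M), and let g be the linear interpolant of the values w_j at the points p_j. Then sup_{p∈[p_1,p_M]} |g(p) − f(p)| ≤ 2ε + 3·max_{1≤j≤M} |v̂_j − f(p_j)|. -/

import Mathlib

/-- Deterministic core of the consistency of the IOQR estimator (Lemma 3.1 combined with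
the interpolation bound from the proof of Theorem 3.2(ii)): if `w` is an isotonic
regression of arbitrary values `vh` and `g` is the linear interpolant of the `w j` at the
grid points `p j`, then `|g x - f x| ≤ 2ε + 3·max_j |vh j - f (p j)|` on `[p 0, p (M-1)]`. -/
theorem isotonic_interpolant_error_le_two_eps_add_three_max
    (ε : ℝ) (hε : 0 < ε)
    (M : ℕ) (hM : 2 ≤ M)
    (p : ℕ → ℝ) (hp : ∀ j, j + 1 < M → p j < p (j + 1))
    (f : ℝ → ℝ)
    (hf : MonotoneOn f (Set.Icc (p 0) (p (M - 1))))
    (hgap : ∀ j, j + 1 < M → f (p (j + 1)) - f (p j) ≤ ε)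
    (vh w : ℕ → ℝ)
    (hw_mono : ∀ i j, i ≤ j → j < M → w i ≤ w j)
    (hw_min : ∀ w' : ℕ → ℝ, (∀ i j, i ≤ j → j < M → w' i ≤ w' j) →
      ∑ j ∈ Finset.range M, (vh j - w j) ^ 2 ≤ ∑ j ∈ Finset.range M, (vh j - w' j) ^ 2)
    (g : ℝ → ℝ)
    (hg : ∀ j, j + 1 < M → ∀ x ∈ Set.Icc (p j) (p (j + 1)),
      g x = w j + (x - p j) * (w (j + 1) - w j) / (p (j + 1) - p j)) :
    ∀ x ∈ Set.Icc (p 0) (p (M - 1)),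
      |g x - f x| ≤ 2 * ε + 3 * ((Finset.range M).sup'
        (Finset.nonempty_range_iff.mpr (by omega)) fun j => |vh j - f (p j)|) := by
  intro x hx
  have hne : (Finset.range M).Nonempty := Finset.nonempty_range_iff.mpr (by omega)
  set D := (Finset.range M).sup' hne (fun j => |vh j - f (p j)|) with hDdef
  have hDle : ∀ j, j < M → |vh j - f (p j)| ≤ D := by
    intro j hj
    rw [hDdef]
    exact Finset.le_sup' (fun j => |vh j - f (p j)|) (Finset.mem_range.mpr hj)
  have hD0 : 0 ≤ D := le_trans (abs_nonneg _) (hDle 0 (by omega))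
  -- p is monotone on indices < M
  have pmono : ∀ i j, i ≤ j → j < M → p i ≤ p j := by
    intro i j hij hjM
    induction j with
    | zero => simp_all
    | succ k ih =>
      rcases Nat.lt_or_ge i (k + 1) with h | h
      · exact le_trans (ih (by omega) (by omega)) (le_of_lt (hp k hjM))
      · have : i = k + 1 := by omega
        simp [this]
  have pmem : ∀ j, j < M → p j ∈ Set.Icc (p 0) (p (M - 1)) := fun j hj =>
    ⟨pmono 0 j (Nat.zero_le _) hj, pmono j (M - 1) (by omega) (by omega)⟩
  have fmono : ∀ i j, i ≤ j → j < M → f (p i) ≤ f (p j) := fun i j hij hj =>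
    hf (pmem i (by omega)) (pmem j hj) (pmono i j hij hj)
  -- vh deviations
  have hvub : ∀ j, j < M → vh j ≤ f (p j) + D := by
    intro j hj
    have := (abs_le.mp (hDle j hj)).2
    linarith
  have hvlb : ∀ j, j < M → f (p j) - D ≤ vh j := by
    intro j hj
    have := (abs_le.mp (hDle j hj)).1
    linarith
  -- upper bound on w
  have hwub : ∀ j, j < M → w j ≤ f (p j) + D := by
    by_contra hcon
    push_neg at hcon
    obtain ⟨k, hkM, hk⟩ := hcon
    set w' : ℕ → ℝ := fun j => min (w j) (f (p j) + D) with hw'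
    have hmono' : ∀ i j, i ≤ j → j < M → w' i ≤ w' j := by
      intro i j hij hj
      exact min_le_min (hw_mono i j hij hj)
        (add_le_add_left (fmono i j hij hj) D)
    have hsum := hw_min w' hmono'
    have hlt : ∑ j ∈ Finset.range M, (vh j - w' j) ^ 2 <
        ∑ j ∈ Finset.range M, (vh j - w j) ^ 2 := by
      apply Finset.sum_lt_sum
      · intro i hi
        have hiM := Finset.mem_range.mp hi
        rcases le_or_gt (w i) (f (p i) + D) with h | h
        · simp [hw', min_eq_left h]
        · have hmin : w' i = f (p i) + D := min_eq_right (le_of_lt h)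
          have hv := hvub i hiM
          rw [hmin]
          nlinarith
      · refine ⟨k, Finset.mem_range.mpr hkM, ?_⟩
        have hmin : w' k = f (p k) + D := min_eq_right (le_of_lt hk)
        have hv := hvub k hkM
        rw [hmin]
        nlinarith
    linarith
  -- lower bound on w
  have hwlb : ∀ j, j < M → f (p j) - D ≤ w j := by
    by_contra hcon
    push_neg at hcon
    obtain ⟨k, hkM, hk⟩ := hcon
    set w' : ℕ → ℝ := fun j => max (w j) (f (p j) - D) with hw'
    have hmono' : ∀ i j, i ≤ j → j < M → w' i ≤ w' j := by
      intro i j hij hj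
      exact max_le_max (hw_mono i j hij hj)
        (sub_le_sub_right (fmono i j hij hj) D)
    have hsum := hw_min w' hmono'
    have hlt : ∑ j ∈ Finset.range M, (vh j - w' j) ^ 2 <
        ∑ j ∈ Finset.range M, (vh j - w j) ^ 2 := by
      apply Finset.sum_lt_sum
      · intro i hi
        have hiM := Finset.mem_range.mp hi
        rcases le_or_gt (f (p i) - D) (w i) with h | h
        · simp [hw', max_eq_left h]
        · have hmax : w' i = f (p i) - D := max_eq_right (le_of_lt h)
          have hv := hvlb i hiM
          rw [hmax]
          nlinarith
      · refine ⟨k, Finset.mem_range.mpr hkM, ?_⟩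
        have hmax : w' k = f (p k) - D := max_eq_right (le_of_lt hk)
        have hv := hvlb k hkM
        rw [hmax]
        nlinarith
    linarith
  -- locate x in a cell
  obtain ⟨j, hj1, hpj, hpj1⟩ : ∃ j, j + 1 < M ∧ p j ≤ x ∧ x ≤ p (j + 1) := by
    set S := (Finset.range (M - 1)).filter (fun j => p j ≤ x) with hS
    have hS0 : (0 : ℕ) ∈ S := Finset.mem_filter.mpr ⟨Finset.mem_range.mpr (by omega), hx.1⟩
    have hSne : S.Nonempty := ⟨0, hS0⟩
    have hjS := Finset.mem_filter.mp (S.max'_mem hSne)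
    have hjlt : S.max' hSne < M - 1 := Finset.mem_range.mp hjS.1
    refine ⟨S.max' hSne, by omega, hjS.2, ?_⟩
    rcases Nat.lt_or_ge (S.max' hSne + 1) (M - 1) with h | h
    · by_contra hc
      push_neg at hc
      have hmem : S.max' hSne + 1 ∈ S :=
        Finset.mem_filter.mpr ⟨Finset.mem_range.mpr h, le_of_lt hc⟩
      have hle := S.le_max' (S.max' hSne + 1) hmem
      omega
    · have heq : S.max' hSne + 1 = M - 1 := by omega
      rw [heq]
      exact hx.2
  -- bounds on g x
  have hg' := hg j hj1 x ⟨hpj, hpj1⟩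
  have hΔ : 0 < p (j + 1) - p j := sub_pos.mpr (hp j hj1)
  have hwj : w j ≤ w (j + 1) := hw_mono j (j + 1) (by omega) hj1
  have hgl : w j ≤ g x := by
    rw [hg']
    have : 0 ≤ (x - p j) * (w (j + 1) - w j) / (p (j + 1) - p j) :=
      div_nonneg (mul_nonneg (by linarith) (by linarith)) (le_of_lt hΔ)
    linarith
  have hgu : g x ≤ w (j + 1) := by
    rw [hg']
    have h1 : (x - p j) * (w (j + 1) - w j) / (p (j + 1) - p j) ≤ w (j + 1) - w j := by
      rw [div_le_iff₀ hΔ]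
      nlinarith
    linarith
  -- bounds on f x
  have hfl : f (p j) ≤ f x := hf (pmem j (by omega)) hx hpj
  have hfu : f x ≤ f (p (j + 1)) := hf hx (pmem (j + 1) hj1) hpj1
  have hgapj := hgap j hj1
  have hw1 := hwub (j + 1) hj1
  have hw0 := hwlb j (by omega)
  have habs : |g x - f x| ≤ ε + D := by
    rw [abs_le]
    constructor <;> nlinarith
  show |g x - f x| ≤ 2 * ε + 3 * D
  linarith
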